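/- Let W = (ω_1,…,ω_n) be a suitable basis of A with eW′ = MW, and let h = Σ_{i=1}^n (h_i/(de)) ω_i with h_i, d ∈ K[x], gcd(d, e) = 1, gcd(h_1,…,h_n, d) = 1, and d squarefree. If h is integrable in A, then d is a constant in K. -/

import Mathlib

noncomputable section
open scoped Classical

open Polynomial

/-- Termwise derivative (w.r.t. `x`) of a generalized (Hahn/Puiseux) series in `x - a`:
the exponent-`q` coefficient of `P'` is `(q+1)` times the exponent-`(q+1)` coefficient of `P`. -/
def hderiv {F : Type} [Field F] (P : HahnSeries ℚ F) : HahnSeries ℚ F where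
  coeff q := ((q + 1 : ℚ) : F) * P.coeff (q + 1)
  isPWO_support' := by
    have hsub : (Function.support fun q : ℚ => ((q + 1 : ℚ) : F) * P.coeff (q + 1))
        ⊆ (fun q : ℚ => q - 1) '' P.support := by
      intro q hq
      refine ⟨q + 1, ?_, by ring⟩
      intro h0
      simp [Function.mem_support, h0] at hq
    exact (P.isPWO_support.image_of_monotoneOn
      (fun x _ y _ hxy => by simpa using hxy)).mono hsub

/-- The valuation of a generalized (Hahn/Puiseux) series: the least exponent occurring,
and `⊤` for the zero series. -/
def hval {F : Type} [Field F] (P : HahnSeries ℚ F) : WithTop ℚ :=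
  if h : P = 0 then ⊤
  else ((P.isWF_support.min (HahnSeries.support_nonempty_iff.mpr h) : ℚ) : WithTop ℚ)

/-- A series is ramified if some exponent in its support is not an integer. -/
def Ramified {F : Type} [Field F] (P : HahnSeries ℚ F) : Prop :=
  ∃ q ∈ P.support, ∀ z : ℤ, (z : ℚ) ≠ q

/-- The set of fractional (non-integer) exponents occurring in a series. -/
def fracSupport {F : Type} [Field F] (P : HahnSeries ℚ F) : Set ℚ :=
  {q | q ∈ P.support ∧ ∀ z : ℤ, (z : ℚ) ≠ q}

/-- The minimal fractional exponent `δ(P)` of a series; `⊤` if `P` is not ramified. -/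
def delta {F : Type} [Field F] (P : HahnSeries ℚ F) : WithTop ℚ :=
  if h : (fracSupport P).Nonempty then
    (((P.isWF_support.mono (fun q hq => hq.1)).min h : ℚ) : WithTop ℚ)
  else ⊤

/-- A Hahn series over `ℚ` is a Puiseux series if its exponents have a common denominator. -/
def IsPuiseux {F : Type} [Field F] (P : HahnSeries ℚ F) : Prop :=
  ∃ r : ℕ, 0 < r ∧ ∀ q ∈ P.support, ∃ z : ℤ, (z : ℚ) / r = q

/-! ### The algebraic function field `A = K(x)[y]/⟨m⟩` -/

/-- The canonical image in `A = K(x)[y]/⟨m⟩` of a polynomial `p ∈ K[x]`. -/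
def toA {K : Type} [Field K] (m : Polynomial (RatFunc K)) (p : Polynomial K) :
    AdjoinRoot m :=
  algebraMap (RatFunc K) (AdjoinRoot m) (algebraMap (Polynomial K) (RatFunc K) p)

/-- `D` is the derivation on `A = K(x)[y]/⟨m⟩` extending `d/dx` on `K(x)`:
it is additive, satisfies the Leibniz rule, and restricts to `d/dx` on `K[x]`
(hence, being a derivation on a field, on all of `K(x)`). -/
structure IsDerivationOnA {K : Type} [Field K] (m : Polynomial (RatFunc K))
    (D : AdjoinRoot m → AdjoinRoot m) : Prop where
  map_add : ∀ f g, D (f + g) = D f + D g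
  leibniz : ∀ f g, D (f * g) = f * D g + g * D f
  map_poly : ∀ p : Polynomial K, D (toA m p) = toA m (Polynomial.derivative p)

/-- `W` is a basis of `A` as a vector space over `K(x)`. -/
def IsKxBasis {K : Type} [Field K] {m : Polynomial (RatFunc K)}
    (W : Fin m.natDegree → AdjoinRoot m) : Prop :=
  LinearIndependent (RatFunc K) W ∧ Submodule.span (RatFunc K) (Set.range W) = ⊤

/-- `e W′ = M W` componentwise. -/
def DerivRel {K : Type} [Field K] {m : Polynomial (RatFunc K)}
    (D : AdjoinRoot m → AdjoinRoot m) (W : Fin m.natDegree → AdjoinRoot m)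
    (e : Polynomial K) (M : Matrix (Fin m.natDegree) (Fin m.natDegree) (Polynomial K)) : Prop :=
  ∀ i, toA m e * D (W i) = ∑ j, toA m (M i j) * W j

/-- `gcd(e, m₁₁, …, mₙₙ) = 1`: the only common divisors of `e` and the entries of `M`
are units. -/
def GcdOne {K : Type} [Field K] {n : ℕ}
    (e : Polynomial K) (M : Matrix (Fin n) (Fin n) (Polynomial K)) : Prop :=
  ∀ p : Polynomial K, p ∣ e → (∀ i j, p ∣ M i j) → IsUnit p

/-! ### Puiseux expansions around a point `a` of the algebraic closure -/

/-- The family of the `n` distinct `K(x)`-embeddings of `A = K(x)[y]/⟨m⟩` into the field of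
Puiseux series around a point `a`: each embedding is a ring homomorphism into the Hahn series
field whose values are Puiseux series, sending constants `c ∈ K` to constant series and the
rational function `x` to `a + (x - a)`, i.e. to the series `a + t` where `t` stands
for `x - a`. -/
structure EmbFamily (K F : Type) [Field K] [Field F] [Algebra K F]
    (m : Polynomial (RatFunc K)) (a : F) where
  emb : Fin m.natDegree → (AdjoinRoot m →+* HahnSeries ℚ F)
  emb_injective : Function.Injective emb
  emb_C : ∀ i (c : K), emb i (toA m (Polynomial.C c)) = HahnSeries.single 0 (algebraMap K F c)
  emb_X : ∀ i, emb i (toA m Polynomial.X) =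
    HahnSeries.single 0 a + HahnSeries.single 1 1
  emb_puiseux : ∀ i f, IsPuiseux (emb i f)

/-- The embeddings around `a` are differential homomorphisms: they intertwine the derivation
`D` on `A` with the termwise derivative of series. -/
def IsDiffFamily {K F : Type} [Field K] [Field F] [Algebra K F]
    {m : Polynomial (RatFunc K)} {a : F} (D : AdjoinRoot m → AdjoinRoot m)
    (σ : EmbFamily K F m a) : Prop :=
  ∀ i f, σ.emb i (D f) = hderiv (σ.emb i f)

/-- `f ∈ A` is locally integral at `a`, i.e. `val_a(f) ≥ 0`: all Puiseux series associated
to `f` around `a` have nonnegative valuation. -/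
def LocIntegralAt {K F : Type} [Field K] [Field F] [Algebra K F]
    {m : Polynomial (RatFunc K)} {a : F} (σ : EmbFamily K F m a)
    (f : AdjoinRoot m) : Prop :=
  ∀ i, 0 ≤ hval (σ.emb i f)

/-- `a` is a branch point of `f ∈ A`: one of the Puiseux series associated to `f` around `a`
is ramified. -/
def IsBranchPointOf {K F : Type} [Field K] [Field F] [Algebra K F]
    {m : Polynomial (RatFunc K)} {a : F} (σ : EmbFamily K F m a)
    (f : AdjoinRoot m) : Prop :=
  ∃ i, Ramified (σ.emb i f)

/-- `f ∈ A` is (globally) integral: locally integral at every point `a` of the algebraic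
closure of `K` (given the system `σ` of Puiseux expansions around each point). -/
def IntegralElem {K : Type} [Field K] {m : Polynomial (RatFunc K)}
    (σ : ∀ a : AlgebraicClosure K, EmbFamily K (AlgebraicClosure K) m a)
    (f : AdjoinRoot m) : Prop :=
  ∀ a, LocIntegralAt (σ a) f

/-- `W` is an integral basis of `A`: a `K(x)`-vector-space basis consisting of integral
elements such that every integral element is a `K[x]`-linear combination of `W`. -/
def IsIntegralBasis {K : Type} [Field K] {m : Polynomial (RatFunc K)}
    (σ : ∀ a : AlgebraicClosure K, EmbFamily K (AlgebraicClosure K) m a)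
    (W : Fin m.natDegree → AdjoinRoot m) : Prop :=
  IsKxBasis W ∧ (∀ i, IntegralElem σ (W i)) ∧
    ∀ f, IntegralElem σ f → ∃ c : Fin m.natDegree → Polynomial K,
      f = ∑ i, toA m (c i) * W i

/-- The rational function `r ∈ K(x)` has no pole at `a`: `r = p/q` with `q(a) ≠ 0`. -/
def NoPoleAt {K F : Type} [Field K] [Field F] [Algebra K F] (a : F) (r : RatFunc K) : Prop :=
  ∃ p q : Polynomial K, Polynomial.aeval a q ≠ 0 ∧
    r * algebraMap (Polynomial K) (RatFunc K) q = algebraMap (Polynomial K) (RatFunc K) p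

/-- `W` is a local integral basis of `A` at `a`: a `K(x)`-vector-space basis consisting of
elements that are locally integral at `a`, such that every element of `A` that is locally
integral at `a` is a linear combination of `W` with coefficients in `K(x)_a` (rational
functions without a pole at `a`). -/
def IsLocalIntegralBasisAt {K F : Type} [Field K] [Field F] [Algebra K F]
    {m : Polynomial (RatFunc K)} {a : F} (σ : EmbFamily K F m a)
    (W : Fin m.natDegree → AdjoinRoot m) : Prop :=
  IsKxBasis W ∧ (∀ i, LocIntegralAt σ (W i)) ∧
    ∀ f, LocIntegralAt σ f → ∃ c : Fin m.natDegree → RatFunc K,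
      (∀ i, NoPoleAt a (c i)) ∧ f = ∑ i, algebraMap (RatFunc K) (AdjoinRoot m) (c i) * W i

/-! ### Auxiliary lemmas for the proof of Statement 6 -/

section AuxStmt6

variable {K : Type} [Field K] {m : Polynomial (RatFunc K)}

lemma auxD_zero (D : AdjoinRoot m → AdjoinRoot m) (hD : IsDerivationOnA m D) :
    D 0 = 0 := by
  have h0 := hD.map_add 0 0
  rw [add_zero] at h0
  exact left_eq_add.mp h0

lemma auxD_sum (D : AdjoinRoot m → AdjoinRoot m) (hD : IsDerivationOnA m D)
    {ι : Type*} (s : Finset ι) (f : ι → AdjoinRoot m) :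
    D (∑ i ∈ s, f i) = ∑ i ∈ s, D (f i) := by
  classical
  induction s using Finset.cons_induction with
  | empty => simpa using auxD_zero D hD
  | cons a s ha ih => rw [Finset.sum_cons, Finset.sum_cons, hD.map_add, ih]

end AuxStmt6
/-- Let `W = (ω₁,…,ωₙ)` be a suitable basis of `A` with `eW′ = MW`, and let
`h = Σ (h_i/(de)) ω_i` with `h_i, d ∈ K[x]`, `gcd(d, e) = 1`, `gcd(h₁,…,hₙ, d) = 1`, and `d`
squarefree. If `h` is integrable in `A`, then `d` is a constant in `K`. -/
theorem d_is_constant_of_integrable {K : Type} [Field K] [CharZero K]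
    (m : Polynomial (RatFunc K)) [Fact (Irreducible m)]
    (D : AdjoinRoot m → AdjoinRoot m) (hD : IsDerivationOnA m D)
    (σ : ∀ a : AlgebraicClosure K, EmbFamily K (AlgebraicClosure K) m a)
    (hσ : ∀ a, IsDiffFamily D (σ a))
    (W : Fin m.natDegree → AdjoinRoot m)
    (e : Polynomial K) (M : Matrix (Fin m.natDegree) (Fin m.natDegree) (Polynomial K))
    -- `W` is a suitable basis:
    (hWb : IsKxBasis W) (hrel : DerivRel D W e M) (hgcd : GcdOne e M)
    (hesqf : Squarefree e) (hWint : ∀ i, IntegralElem σ (W i))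
    (h : AdjoinRoot m) (hc : Fin m.natDegree → Polynomial K) (d : Polynomial K)
    (hd0 : d ≠ 0) (he0 : e ≠ 0)
    -- `h = Σ (h_i/(de)) ω_i`:
    (hrep : toA m d * toA m e * h = ∑ i, toA m (hc i) * W i)
    (hde : IsCoprime d e)
    (hhd : ∀ p : Polynomial K, p ∣ d → (∀ i, p ∣ hc i) → IsUnit p)
    (hdsqf : Squarefree d)
    -- `h` is integrable in `A`:
    (hint : ∃ H : AdjoinRoot m, h = D H) :
    ∃ c : K, d = Polynomial.C c := by
  classical
  obtain ⟨H, hH⟩ := hint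
  set φ : Polynomial K →+* AdjoinRoot m :=
    (algebraMap (RatFunc K) (AdjoinRoot m)).comp (algebraMap (Polynomial K) (RatFunc K))
    with hφdef
  have hφt : ∀ x : Polynomial K, toA m x = φ x := fun _ => rfl
  have Dφ : ∀ pp : Polynomial K, D (φ pp) = φ (derivative pp) := hD.map_poly
  have hrel' : ∀ i, φ e * D (W i) = ∑ j, φ (M i j) * W j := hrel
  have hrep' : φ d * φ e * h = ∑ i, φ (hc i) * W i := hrep
  -- coordinates of H in the basis W
  have hHmem : H ∈ Submodule.span (RatFunc K) (Set.range W) := by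
    rw [hWb.2]; exact Submodule.mem_top
  obtain ⟨r, hr⟩ := (Submodule.mem_span_range_iff_exists_fun (RatFunc K)).mp hHmem
  -- a common denominator Q, numerators P
  set Q : Polynomial K := ∏ i, (r i).denom with hQdef
  have hQ0 : Q ≠ 0 := Finset.prod_ne_zero_iff.mpr fun i _ => RatFunc.denom_ne_zero _
  set P : Fin m.natDegree → Polynomial K :=
    fun i => (r i).num * ∏ j ∈ Finset.univ.erase i, (r j).denom with hPdef
  have hPQ : ∀ i, r i * algebraMap (Polynomial K) (RatFunc K) Q
      = algebraMap (Polynomial K) (RatFunc K) (P i) := by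
    intro i
    rw [hQdef, hPdef, ← Finset.mul_prod_erase Finset.univ _ (Finset.mem_univ i),
      map_mul, map_mul, ← mul_assoc]
    congr 1
    rw [← eq_div_iff (RatFunc.algebraMap_ne_zero (RatFunc.denom_ne_zero (r i)))]
    exact (RatFunc.num_div_denom (r i)).symm
  -- reduce by the gcd, to get a reduced common denominator q with numerators p
  set G : Polynomial K := gcd Q (Finset.univ.gcd P) with hGdef
  have hGQ : G ∣ Q := gcd_dvd_left _ _
  have hGP : ∀ i, G ∣ P i := fun i =>
    (gcd_dvd_right _ _).trans (Finset.gcd_dvd (Finset.mem_univ i))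
  obtain ⟨q, hq⟩ := hGQ
  choose p hp using hGP
  have hG0 : G ≠ 0 := fun h0 => hQ0 (by rw [hq, h0, zero_mul])
  have hq0 : q ≠ 0 := fun h0 => hQ0 (by rw [hq, h0, mul_zero])
  have hGmap : algebraMap (Polynomial K) (RatFunc K) G ≠ 0 :=
    RatFunc.algebraMap_ne_zero hG0
  have hpq : ∀ i, r i * algebraMap (Polynomial K) (RatFunc K) q
      = algebraMap (Polynomial K) (RatFunc K) (p i) := by
    intro i
    have h1 := hPQ i
    rw [hq, hp i, map_mul, map_mul] at h1
    apply mul_left_cancel₀ hGmap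
    rw [← h1]; ring
  have hcop : ∀ π : Polynomial K, π ∣ q → (∀ i, π ∣ p i) → IsUnit π := by
    intro π hπq hπp
    have h3 : G * π ∣ G := by
      have hA : G * π ∣ Q := (mul_dvd_mul_left G hπq).trans (dvd_of_eq hq.symm)
      have hB : G * π ∣ Finset.univ.gcd P :=
        Finset.dvd_gcd fun i _ => (mul_dvd_mul_left G (hπp i)).trans (dvd_of_eq (hp i).symm)
      exact dvd_gcd hA hB
    obtain ⟨t, ht⟩ := h3
    have h4 : G * 1 = G * (π * t) := by rw [mul_one, ← mul_assoc, ← ht]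
    exact IsUnit.of_mul_eq_one _ (mul_left_cancel₀ hG0 h4).symm
  -- the A-level identity
  have hqH : φ q * H = ∑ i, φ (p i) * W i := by
    rw [← hr, Finset.mul_sum]
    refine Finset.sum_congr rfl fun i _ => ?_
    rw [Algebra.smul_def, ← mul_assoc]
    congr 1
    show φ q * algebraMap (RatFunc K) (AdjoinRoot m) (r i) = φ (p i)
    rw [hφdef]
    simp only [RingHom.comp_apply]
    rw [← map_mul, mul_comm, hpq i]
  have h1 : D (φ q * H) = φ q * h + H * φ (derivative q) := by
    rw [hD.leibniz, Dφ, ← hH]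
  have h2 : D (∑ i, φ (p i) * W i)
      = ∑ i, (φ (p i) * D (W i) + W i * φ (derivative (p i))) := by
    rw [auxD_sum D hD]
    exact Finset.sum_congr rfl fun i _ => by rw [hD.leibniz, Dφ]
  have h3 : φ q * h + H * φ (derivative q)
      = ∑ i, (φ (p i) * D (W i) + W i * φ (derivative (p i))) := by
    rw [← h1, hqH, h2]
  -- multiply by φ (d*e*q) and expand both sides
  have e1 : φ (d * e * q) * (φ q * h + H * φ (derivative q))
      = ∑ i, φ (q * q * hc i + d * e * derivative q * p i) * W i := by
    have lhs1 : φ (d * e * q) * (φ q * h)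
        = (φ q * φ q) * (φ d * φ e * h) := by simp only [map_mul]; ring
    have lhs2 : φ (d * e * q) * (H * φ (derivative q))
        = (φ d * φ e * φ (derivative q)) * (φ q * H) := by simp only [map_mul]; ring
    rw [mul_add, lhs1, lhs2, hrep', hqH, Finset.mul_sum, Finset.mul_sum,
      ← Finset.sum_add_distrib]
    refine Finset.sum_congr rfl fun i _ => ?_
    simp only [map_mul, map_add]
    ring
  have e2 : φ (d * e * q) * (∑ i, (φ (p i) * D (W i) + W i * φ (derivative (p i))))
      = ∑ i, φ (d * e * q * derivative (p i) + d * q * ∑ j, p j * M j i) * W i := by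
    rw [Finset.mul_sum]
    have term : ∀ i, φ (d * e * q) * (φ (p i) * D (W i) + W i * φ (derivative (p i)))
        = φ (d * q * p i) * (φ e * D (W i))
          + (φ d * φ e * φ q * φ (derivative (p i))) * W i := by
      intro i; simp only [map_mul]; ring
    simp only [term, hrel']
    rw [Finset.sum_add_distrib]
    have s1 : ∑ i, φ (d * q * p i) * ∑ j, φ (M i j) * W j
        = ∑ j, (∑ i, φ d * φ q * (φ (p i) * φ (M i j))) * W j := by
      simp only [Finset.mul_sum, map_mul]
      rw [Finset.sum_comm]
      refine Finset.sum_congr rfl fun j _ => ?_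
      rw [Finset.sum_mul]
      exact Finset.sum_congr rfl fun i _ => by ring
    rw [s1, ← Finset.sum_add_distrib]
    refine Finset.sum_congr rfl fun i _ => ?_
    have hbφ : φ (d * e * q * derivative (p i) + d * q * ∑ j, p j * M j i)
        = (∑ k, φ d * φ q * (φ (p k) * φ (M k i))) + φ d * φ e * φ q * φ (derivative (p i)) := by
      rw [map_add, map_mul, map_mul, map_mul, map_mul, map_mul, map_sum, Finset.mul_sum, add_comm]
      congr 1
      refine Finset.sum_congr rfl fun k _ => ?_
      rw [map_mul]
    rw [hbφ, add_mul, Finset.sum_mul]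
  -- extract the polynomial identities
  have key : ∀ i, q * q * hc i + d * e * derivative q * p i
      = d * e * q * derivative (p i) + d * q * ∑ j, p j * M j i := by
    have h4 : ∑ i, φ (q * q * hc i + d * e * derivative q * p i) * W i
        = ∑ i, φ (d * e * q * derivative (p i) + d * q * ∑ j, p j * M j i) * W i := by
      rw [← e1, ← e2, h3]
    have h6 : ∑ i, ((algebraMap (Polynomial K) (RatFunc K)) (q * q * hc i + d * e * derivative q * p i)
        - (algebraMap (Polynomial K) (RatFunc K)) (d * e * q * derivative (p i) + d * q * ∑ j, p j * M j i)) • W i = 0 := by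
      simp only [sub_smul]
      rw [Finset.sum_sub_distrib, sub_eq_zero]
      calc ∑ i, ((algebraMap (Polynomial K) (RatFunc K)) (q * q * hc i + d * e * derivative q * p i)) • W i
          = ∑ i, φ (q * q * hc i + d * e * derivative q * p i) * W i :=
            Finset.sum_congr rfl fun i _ => by rw [Algebra.smul_def]; rfl
        _ = ∑ i, φ (d * e * q * derivative (p i) + d * q * ∑ j, p j * M j i) * W i := h4
        _ = ∑ i, ((algebraMap (Polynomial K) (RatFunc K)) (d * e * q * derivative (p i) + d * q * ∑ j, p j * M j i)) • W i :=
            Finset.sum_congr rfl fun i _ => by rw [Algebra.smul_def]; rfl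
    intro i
    have h7 := Fintype.linearIndependent_iff.mp hWb.1 _ h6 i
    exact RatFunc.algebraMap_injective K (sub_eq_zero.mp h7)
  -- endgame: no prime divides d
  have hdu : IsUnit d := by
    by_contra hdu
    obtain ⟨π, hirr, hπd⟩ := WfDvdMonoid.exists_irreducible_factor hdu hd0
    have hπ : Prime π := hirr.prime
    have hπ0 : π ≠ 0 := hπ.ne_zero
    have hπe : ¬ π ∣ e := by
      obtain ⟨u, v, huv⟩ := hde
      intro hdvd
      exact hπ.not_unit (isUnit_of_dvd_one (huv ▸ dvd_add (hπd.mul_left u) (hdvd.mul_left v)))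
    obtain ⟨k, q₁, hq₁, hqfac⟩ := WfDvdMonoid.max_power_factor hq0 hirr
    rcases Nat.eq_zero_or_pos k with hk0 | hk1
    · -- case π ∤ q
      have hπq : ¬ π ∣ q := by rw [hqfac, hk0, pow_zero, one_mul]; exact hq₁
      have hπh : ∀ i, π ∣ hc i := by
        intro i
        have hdvd : π ∣ q * q * hc i := by
          have heq : q * q * hc i
              = d * (e * q * derivative (p i) + q * (∑ j, p j * M j i)
                  - e * derivative q * p i) := by
            linear_combination key i
          rw [heq]
          exact hπd.mul_right _
        rcases hπ.dvd_mul.mp hdvd with h' | h'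
        · rcases hπ.dvd_mul.mp h' with h'' | h'' <;> exact absurd h'' hπq
        · exact h'
      exact hπ.not_unit (hhd π hπd hπh)
    · -- case π^k ∥ q with k ≥ 1
      have hπq : π ∣ q := by
        rw [hqfac]
        exact (dvd_pow_self π hk1.ne').mul_right q₁
      obtain ⟨i₀, hpi₀⟩ : ∃ i, ¬ π ∣ p i := by
        by_contra hall
        push_neg at hall
        exact hπ.not_unit (hcop π hπq hall)
      obtain ⟨d₁, hd₁⟩ := hπd
      have hπd₁ : ¬ π ∣ d₁ := by
        intro hdvd
        obtain ⟨t, ht⟩ := hdvd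
        exact hπ.not_unit (hdsqf π ⟨t, by rw [hd₁, ht]; ring⟩)
      have hq' : derivative q
          = π ^ (k - 1) * (C (k : K) * derivative π * q₁ + π * derivative q₁) := by
        rw [hqfac, derivative_mul, derivative_pow]
        rw [show π ^ k = π ^ (k - 1) * π by rw [← pow_succ]; congr 1; omega]
        ring
      have hdvd1 : π ^ (k + 1) ∣ q * q * hc i₀ :=
        dvd_trans (pow_dvd_pow π (by omega : k + 1 ≤ k + k))
          ⟨q₁ * q₁ * hc i₀, by rw [hqfac, pow_add]; ring⟩
      have hdvd2 : π ^ (k + 1) ∣ d * e * q * derivative (p i₀) :=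
        ⟨d₁ * e * q₁ * derivative (p i₀), by rw [hd₁, hqfac, pow_succ]; ring⟩
      have hdvd3 : π ^ (k + 1) ∣ d * q * (∑ j, p j * M j i₀) :=
        ⟨d₁ * q₁ * (∑ j, p j * M j i₀), by rw [hd₁, hqfac, pow_succ]; ring⟩
      have hdvd4 : π ^ (k + 1) ∣ d * e * derivative q * p i₀ := by
        have heq : d * e * derivative q * p i₀
            = d * e * q * derivative (p i₀) + d * q * (∑ j, p j * M j i₀)
              - q * q * hc i₀ := by
          linear_combination key i₀
        rw [heq]
        exact dvd_sub (dvd_add hdvd2 hdvd3) hdvd1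
      rw [hd₁, hq'] at hdvd4
      have hre : π * d₁ * e * (π ^ (k - 1) * (C (k : K) * derivative π * q₁ + π * derivative q₁)) * p i₀
          = π ^ k * (d₁ * e * (C (k : K) * derivative π * q₁ + π * derivative q₁) * p i₀) := by
        rw [show π ^ k = π * π ^ (k - 1) by rw [← pow_succ']; congr 1; omega]
        ring
      rw [hre, pow_succ] at hdvd4
      have hT : π ∣ d₁ * e * (C (k : K) * derivative π * q₁ + π * derivative q₁) * p i₀ :=
        (mul_dvd_mul_iff_left (pow_ne_zero k hπ0)).mp hdvd4
      have hT2 : π ∣ C (k : K) * derivative π * q₁ + π * derivative q₁ := by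
        rcases hπ.dvd_mul.mp hT with h' | h'
        · rcases hπ.dvd_mul.mp h' with h'' | h''
          · rcases hπ.dvd_mul.mp h'' with h5 | h5
            · exact absurd h5 hπd₁
            · exact absurd h5 hπe
          · exact h''
        · exact absurd h' hpi₀
      have hT3 : π ∣ C (k : K) * derivative π * q₁ := by
        have h8 := dvd_sub hT2 (dvd_mul_right π (derivative q₁))
        simpa using h8
      have hndeg : π.natDegree ≠ 0 := by
        intro h0
        have hCe : π = C (π.coeff 0) := eq_C_of_natDegree_eq_zero h0
        apply hπ.not_unit
        rw [hCe]
        refine Polynomial.isUnit_C.mpr (isUnit_iff_ne_zero.mpr ?_)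
        intro hc0
        exact hπ0 (by rw [hCe, hc0, map_zero])
      rcases hπ.dvd_mul.mp hT3 with h' | h'
      · rcases hπ.dvd_mul.mp h' with h'' | h''
        · have hk0K : (k : K) ≠ 0 := Nat.cast_ne_zero.mpr hk1.ne'
          have hCk0 : (C (k : K) : Polynomial K) ≠ 0 := by
            simpa using hk0K
          have h9 := Polynomial.natDegree_le_of_dvd h'' hCk0
          rw [Polynomial.natDegree_C] at h9
          exact hndeg (Nat.le_zero.mp h9)
        · have hd'0 : derivative π ≠ 0 := fun h0 =>
            hndeg (natDegree_eq_zero_of_derivative_eq_zero h0)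
          have hle := Polynomial.natDegree_le_of_dvd h'' hd'0
          have hlt := Polynomial.natDegree_derivative_lt hndeg
          omega
      · exact absurd h' hq₁
  obtain ⟨u, hu, hC⟩ := Polynomial.isUnit_iff.mp hdu
  exact ⟨u, hC.symm⟩
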